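/- Let 0 < c ≤ 1 and σ² > 0, set a = σ²(1−√c)², b = σ²(1+√c)², and let f_{c,σ²}(t) = √((t−a)(b−t))/(2πcσ²t) on [a, b]. Then c·(b/σ² − 1)·∫_a^b t/(b − t) · f_{c,σ²}(t) dt = 2c + c√c. (The integrand has an integrable singularity at t = b since f_{c,σ²} vanishes like √(b−t) there.) -/

import Mathlib

open Real

private lemma aux_int (a b C : ℝ) (ha0 : 0 ≤ a) (hab : a < b) (hC : 0 < C) :
    (∫ t in a..b, t / (b - t) * (Real.sqrt ((t - a) * (b - t)) / (C * t)))
      = Real.pi * (b - a) / (2 * C) := by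
  have hba : (0:ℝ) < b - a := by linarith
  have hba' : b - a ≠ 0 := ne_of_gt hba
  have hCne : C ≠ 0 := ne_of_gt hC
  set g : ℝ → ℝ := fun t => t / (b - t) * (Real.sqrt ((t - a) * (b - t)) / (C * t)) with hg
  set F : ℝ → ℝ := fun t =>
    ((b - a) / 2 * Real.arcsin ((2 * t - a - b) / (b - a)) - Real.sqrt ((t - a) * (b - t))) / C
    with hF
  -- integrability of g
  have hint : IntervalIntegrable g MeasureTheory.volume a b := by
    rw [intervalIntegrable_iff_integrableOn_Ioc_of_le hab.le]
    have hJ : IntervalIntegrable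
        (fun t => Real.sqrt (t - a) / C * (b - t) ^ (-(1/2) : ℝ)) MeasureTheory.volume a b := by
      have h1 : IntervalIntegrable (fun x : ℝ => x ^ (-(1/2) : ℝ)) MeasureTheory.volume
          (b - a) 0 := intervalIntegral.intervalIntegrable_rpow' (by norm_num)
      have h2 := h1.comp_sub_left b
      simp only [sub_sub_cancel, sub_zero] at h2
      exact h2.continuousOn_mul
        (((Real.continuous_sqrt.comp (continuous_id.sub continuous_const)).div_const C).continuousOn)
    have hJ' := (intervalIntegrable_iff_integrableOn_Ioc_of_le hab.le).mp hJ
    refine hJ'.congr_fun (fun t ht => ?_) measurableSet_Ioc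
    obtain ⟨ht1, ht2⟩ := ht
    rcases eq_or_lt_of_le ht2 with h | h
    · -- t = b
      subst h
      simp [hg, Real.zero_rpow (by norm_num : (-(1/2):ℝ) ≠ 0)]
    · have htb : (0:ℝ) < b - t := by linarith
      have hta : (0:ℝ) < t - a := by linarith
      have ht0 : (0:ℝ) < t := lt_of_le_of_lt ha0 ht1
      have hsb : (0:ℝ) < Real.sqrt (b - t) := Real.sqrt_pos.mpr htb
      rw [hg]
      simp only
      rw [Real.sqrt_mul hta.le, Real.rpow_neg htb.le, ← Real.sqrt_eq_rpow]
      have hbb : Real.sqrt (b - t) * Real.sqrt (b - t) = b - t := Real.mul_self_sqrt htb.le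
      field_simp
      linear_combination (-1) * hbb
  -- FTC
  have hcont : ContinuousOn F (Set.Icc a b) := by
    apply Continuous.continuousOn
    apply Continuous.div_const
    apply Continuous.sub
    · exact continuous_const.mul (Real.continuous_arcsin.comp
        (((continuous_const.mul continuous_id).sub continuous_const).sub continuous_const |>.div_const _))
    · exact Real.continuous_sqrt.comp
        (((continuous_id.sub continuous_const)).mul (continuous_const.sub continuous_id))
  have hderiv : ∀ t ∈ Set.Ioo a b, HasDerivWithinAt F (g t) (Set.Ioi t) t := by
    intro t ht
    obtain ⟨ht1, ht2⟩ := ht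
    have hta : (0:ℝ) < t - a := by linarith
    have htb : (0:ℝ) < b - t := by linarith
    have ht0 : (0:ℝ) < t := lt_of_le_of_lt ha0 ht1
    have hP : (0:ℝ) < (t - a) * (b - t) := mul_pos hta htb
    have hsP : (0:ℝ) < Real.sqrt ((t - a) * (b - t)) := Real.sqrt_pos.mpr hP
    set u : ℝ := (2 * t - a - b) / (b - a) with hu
    have hu1 : u ≠ -1 := by
      intro h; rw [hu, div_eq_iff hba'] at h; nlinarith
    have hu2 : u ≠ 1 := by
      intro h; rw [hu, div_eq_iff hba'] at h; nlinarith
    have h1 : HasDerivAt (fun t : ℝ => (2 * t - a - b) / (b - a)) (2 / (b - a)) t := by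
      have := ((((hasDerivAt_id t).const_mul (2:ℝ)).sub_const a).sub_const b).div_const (b - a)
      simpa using this
    have h2 : HasDerivAt (fun t : ℝ => Real.arcsin ((2 * t - a - b) / (b - a)))
        (1 / Real.sqrt (1 - u ^ 2) * (2 / (b - a))) t :=
      by have := (Real.hasDerivAt_arcsin hu1 hu2).comp t h1; exact this
    have h3 : HasDerivAt (fun t : ℝ => (t - a) * (b - t)) (1 * (b - t) + (t - a) * (0 - 1)) t :=
      ((hasDerivAt_id t).sub_const a).mul ((hasDerivAt_const t b).sub (hasDerivAt_id t))
    have h4 : HasDerivAt (fun t : ℝ => Real.sqrt ((t - a) * (b - t)))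
        (1 / (2 * Real.sqrt ((t - a) * (b - t))) * (1 * (b - t) + (t - a) * (0 - 1))) t :=
      (Real.hasDerivAt_sqrt (ne_of_gt hP)).comp t h3
    have h5 : HasDerivAt F
        (((b - a) / 2 * (1 / Real.sqrt (1 - u ^ 2) * (2 / (b - a))) -
          1 / (2 * Real.sqrt ((t - a) * (b - t))) * (1 * (b - t) + (t - a) * (0 - 1))) / C) t :=
      ((h2.const_mul ((b - a) / 2)).sub h4).div_const C
    have hsq : Real.sqrt (1 - u ^ 2) = 2 * Real.sqrt ((t - a) * (b - t)) / (b - a) := by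
      have h9 : (1 : ℝ) - u ^ 2 = (2 * Real.sqrt ((t - a) * (b - t)) / (b - a)) ^ 2 := by
        rw [hu, div_pow, div_pow, mul_pow, Real.sq_sqrt hP.le]
        field_simp
        ring
      rw [h9, Real.sqrt_sq (by positivity)]
    have heq : ((b - a) / 2 * (1 / Real.sqrt (1 - u ^ 2) * (2 / (b - a))) -
          1 / (2 * Real.sqrt ((t - a) * (b - t))) * (1 * (b - t) + (t - a) * (0 - 1))) / C
        = g t := by
      rw [hsq, hg]
      simp only
      have hss : Real.sqrt ((t - a) * (b - t)) * Real.sqrt ((t - a) * (b - t))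
          = (t - a) * (b - t) := Real.mul_self_sqrt hP.le
      have hSne : Real.sqrt ((t - a) * (b - t)) ≠ 0 := ne_of_gt hsP
      set S := Real.sqrt ((t - a) * (b - t)) with hSdef
      field_simp
      linear_combination (-2) * hss
    rw [← heq]
    exact h5.hasDerivWithinAt
  have := intervalIntegral.integral_eq_sub_of_hasDeriv_right_of_le hab.le hcont hderiv hint
  rw [this, hF]
  simp only
  have e1 : (2 * b - a - b) / (b - a) = 1 := by rw [div_eq_one_iff_eq hba']; ring
  have e2 : (2 * a - a - b) / (b - a) = -1 := by field_simp; ring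
  rw [e1, e2, Real.arcsin_one, Real.arcsin_neg_one]
  rw [show (b - a) * (b - b) = 0 by ring, show (a - a) * (b - a) = 0 by ring, Real.sqrt_zero]
  field_simp
  ring

/-- Boundary value of the GIC increment under the simple spiked model: for `0 < c ≤ 1`,
`σ² > 0`, `a = σ²(1-√c)²`, `b = σ²(1+√c)²`, and Marčenko–Pastur density
`f_{c,σ²}(t) = √((t-a)(b-t))/(2πcσ²t)`, one has
`c(b/σ² - 1) ∫_a^b t/(b-t) f_{c,σ²}(t) dt = 2c + c√c`. -/
theorem stmt11 (c s2 : ℝ) (hc : 0 < c) (hc1 : c ≤ 1) (hs2 : 0 < s2)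
    (a b : ℝ) (ha : a = s2 * (1 - Real.sqrt c) ^ 2) (hb : b = s2 * (1 + Real.sqrt c) ^ 2) :
    c * (b / s2 - 1) *
        ∫ t in a..b, t / (b - t) * (Real.sqrt ((t - a) * (b - t)) / (2 * Real.pi * c * s2 * t))
      = 2 * c + c * Real.sqrt c := by
  set r := Real.sqrt c with hr
  have hr0 : 0 < r := Real.sqrt_pos.mpr hc
  have hr2 : r ^ 2 = c := Real.sq_sqrt hc.le
  have hr1 : r ≤ 1 := by
    rw [show (1:ℝ) = Real.sqrt 1 by simp [Real.sqrt_one]]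
    exact Real.sqrt_le_sqrt hc1
  have ha0 : 0 ≤ a := by rw [ha]; positivity
  have hab : a < b := by
    rw [ha, hb]
    have : (1 - r) ^ 2 < (1 + r) ^ 2 := by nlinarith
    exact (mul_lt_mul_iff_right₀ hs2).mpr this
  have hC : (0:ℝ) < 2 * Real.pi * c * s2 := by positivity
  rw [aux_int a b (2 * Real.pi * c * s2) ha0 hab hC]
  have hbma : b - a = 4 * s2 * r := by rw [ha, hb]; ring
  have hbs : b / s2 - 1 = 2 * r + c := by
    rw [hb]
    field_simp
    nlinarith [hr2]
  rw [hbma, hbs]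
  have hpi : Real.pi ≠ 0 := Real.pi_ne_zero
  field_simp
  nlinarith [hr2, Real.pi_pos, hs2, hr0]
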